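/- arXiv:2009.03110 — 3 statements merged into one kernel-verified Lean document; each statement's English description precedes it below -/
import Mathlib

section
/- Let β > 0, E_0 > 0, and q ∈ (p^β, 1/2] where p^β = e^{-βE_0}/(1+e^{-βE_0}). Define E(q) = -(1/β) ln(q/(1-q)) and ε_III(q) = -E(q) + E_0 + (1/β)·ln((1+e^{-βE_0})/(1+e^{-βE(q)})). Then ε_III(q) > 0, and ε_III(p^β) = 0. -/
open Real

theorem eps_III_pos (β E₀ : ℝ) (hβ : 0 < β) (hE₀ : 0 < E₀)
    (pβ : ℝ) (hpβ : pβ = exp (-β * E₀) / (1 + exp (-β * E₀)))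
    (q : ℝ) (hq1 : pβ < q) (hq2 : q ≤ 1 / 2)
    (Eq : ℝ) (hEq : Eq = -(1 / β) * log (q / (1 - q)))
    (ε : ℝ)
    (hε : ε = -Eq + E₀ + (1 / β) * log ((1 + exp (-β * E₀)) / (1 + exp (-β * Eq)))) :
    0 < ε ∧
    -(-(1 / β) * log (pβ / (1 - pβ))) + E₀ +
        (1 / β) * log ((1 + exp (-β * E₀)) /
          (1 + exp (-β * (-(1 / β) * log (pβ / (1 - pβ)))))) = 0 := by
  have hβ' : β ≠ 0 := ne_of_gt hβ
  have ha : 0 < exp (-β * E₀) := exp_pos _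
  set a := exp (-β * E₀) with hadef
  have hloga : log a = -β * E₀ := log_exp _
  have hpβpos : 0 < pβ := by rw [hpβ]; positivity
  have hq0 : 0 < q := hpβpos.trans hq1
  have h1q : 0 < 1 - q := by linarith
  set b := q / (1 - q) with hbdef
  have hbpos : 0 < b := div_pos hq0 h1q
  have hab : a < b := by
    rw [hbdef, lt_div_iff₀ h1q]
    have h := hq1
    rw [hpβ, div_lt_iff₀ (by positivity)] at h
    nlinarith
  have harg : -β * Eq = log b := by
    rw [hEq]; field_simp
  have hexp : exp (-β * Eq) = b := by rw [harg, exp_log hbpos]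
  constructor
  · have h1a : 0 < 1 + a := by positivity
    have h1b : 0 < 1 + b := by positivity
    have key : a * (1 + b) < b * (1 + a) := by nlinarith
    have hlog : log (a * (1 + b)) < log (b * (1 + a)) :=
      Real.log_lt_log (by positivity) key
    have hβε : β * ε = log (b * (1 + a)) - log (a * (1 + b)) := by
      rw [hε, hexp]
      rw [log_div (ne_of_gt h1a) (ne_of_gt h1b),
        log_mul (ne_of_gt hbpos) (ne_of_gt h1a),
        log_mul (ne_of_gt ha) (ne_of_gt h1b)]
      have hβEq : β * Eq = -log b := by linarith [harg]
      field_simp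
      nlinarith [hβEq, hloga]
    have : 0 < β * ε := by rw [hβε]; linarith
    nlinarith
  · have hratio : pβ / (1 - pβ) = a := by
      rw [hpβ]; field_simp; ring
    rw [hratio, hloga]
    have h1 : -β * (-(1 / β) * (-β * E₀)) = -β * E₀ := by field_simp
    rw [h1]
    have : -(-(1 / β) * (-β * E₀)) + E₀ = 0 := by field_simp; ring
    rw [this, div_self (by positivity : (1:ℝ) + a ≠ 0), log_one, mul_zero, zero_add]
end

section
/- Let W be a random variable with mean E[W] = -ΔF - A for reals ΔF and 0 ≤ A < 4/β (β > 0), and variance Var(W) ≤ 2A/β. Then for any ε > 0, P(W ≤ -ΔF + ε) ≥ ε/(4/β + ε). -/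
open MeasureTheory ProbabilityTheory

/-- One-sided Chebyshev (Cantelli) inequality, in product form. -/
lemma cantelli_aux
    {Ω : Type*} [MeasurableSpace Ω] (μ : Measure Ω) [IsProbabilityMeasure μ]
    (W : Ω → ℝ) (hW : MemLp W 2 μ) (c : ℝ) (hc : 0 < c) :
    (μ {ω | (∫ x, W x ∂μ) + c < W ω}).toReal * (c ^ 2 + variance W μ)
      ≤ variance W μ := by
  have hV0 : 0 ≤ variance W μ := variance_nonneg W μ
  have hlam0 : 0 ≤ variance W μ / c := by positivity
  have hWint : Integrable W μ := hW.integrable one_le_two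
  set Y : Ω → ℝ := fun ω => W ω + (variance W μ / c - ∫ x, W x ∂μ) with hY
  have hYmem : MemLp Y 2 μ := hW.add (memLp_const _)
  have hintY : ∫ ω, Y ω ∂μ = variance W μ / c := by
    rw [hY, integral_add hWint (integrable_const _)]
    simp
  have hvarY : variance Y μ = variance W μ := by
    rw [variance_eq_integral hYmem.aemeasurable, variance_eq_integral hW.aemeasurable, hintY]
    congr 1
    funext ω
    simp only [hY, Pi.pow_apply, Pi.sub_apply]
    ring
  have hYsq : ∫ ω, (Y ω) ^ 2 ∂μ = variance W μ + (variance W μ / c) ^ 2 := by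
    have h := variance_eq_sub hYmem
    rw [hvarY, hintY] at h
    have h2 : (μ[Y ^ 2] : ℝ) = ∫ ω, (Y ω) ^ 2 ∂μ := rfl
    rw [h2] at h
    linarith
  have hmarkov : (c + variance W μ / c) ^ 2
        * (μ {x | (c + variance W μ / c) ^ 2 ≤ (Y x) ^ 2}).toReal
      ≤ ∫ x, (Y x) ^ 2 ∂μ :=
    mul_meas_ge_le_integral_of_nonneg (ae_of_all _ fun x => sq_nonneg _)
      hYmem.integrable_sq _
  have hsub : {ω | (∫ x, W x ∂μ) + c < W ω}
      ⊆ {x | (c + variance W μ / c) ^ 2 ≤ (Y x) ^ 2} := by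
    intro x hx
    simp only [Set.mem_setOf_eq] at hx ⊢
    have hx' : c + variance W μ / c ≤ Y x := by
      simp only [hY]; linarith
    exact pow_le_pow_left₀ (by positivity) hx' 2
  have hmono : (μ {ω | (∫ x, W x ∂μ) + c < W ω}).toReal
      ≤ (μ {x | (c + variance W μ / c) ^ 2 ≤ (Y x) ^ 2}).toReal :=
    ENNReal.toReal_mono (by finiteness) (measure_mono hsub)
  set q : ℝ := (μ {ω | (∫ x, W x ∂μ) + c < W ω}).toReal with hq
  have hq0 : 0 ≤ q := ENNReal.toReal_nonneg
  have hkey : (c + variance W μ / c) ^ 2 * q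
      ≤ variance W μ + (variance W μ / c) ^ 2 := by
    calc (c + variance W μ / c) ^ 2 * q
        ≤ (c + variance W μ / c) ^ 2
            * (μ {x | (c + variance W μ / c) ^ 2 ≤ (Y x) ^ 2}).toReal :=
          mul_le_mul_of_nonneg_left hmono (by positivity)
      _ ≤ ∫ x, (Y x) ^ 2 ∂μ := hmarkov
      _ = variance W μ + (variance W μ / c) ^ 2 := hYsq
  have h1 : ((c + variance W μ / c) ^ 2 * q) * c ^ 2
      ≤ (variance W μ + (variance W μ / c) ^ 2) * c ^ 2 :=
    mul_le_mul_of_nonneg_right hkey (by positivity)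
  have e1 : (c + variance W μ / c) ^ 2 * c ^ 2 = (c ^ 2 + variance W μ) ^ 2 := by
    field_simp
  have e2 : (variance W μ + (variance W μ / c) ^ 2) * c ^ 2
      = variance W μ * (c ^ 2 + variance W μ) := by
    field_simp
  have h2 : (c ^ 2 + variance W μ) ^ 2 * q
      ≤ variance W μ * (c ^ 2 + variance W μ) := by nlinarith [h1]
  have hcv : 0 < c ^ 2 + variance W μ := by positivity
  nlinarith [h2, hcv]

theorem chebyshev_small_area
    {Ω : Type*} [MeasurableSpace Ω] (μ : Measure Ω) [IsProbabilityMeasure μ]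
    (W : Ω → ℝ) (hW : MemLp W 2 μ)
    (β ΔF A : ℝ) (hβ : 0 < β) (hA0 : 0 ≤ A) (hA : A < 4 / β)
    (hmean : ∫ ω, W ω ∂μ = -ΔF - A)
    (hvar : variance W μ ≤ 2 * A / β)
    (ε : ℝ) (hε : 0 < ε) :
    ε / (4 / β + ε) ≤ (μ {ω | W ω ≤ -ΔF + ε}).toReal := by
  have hc : (0:ℝ) < A + ε := by positivity
  have hcant := cantelli_aux μ W hW (A + ε) hc
  rw [hmean] at hcant
  have hEq : {ω | -ΔF - A + (A + ε) < W ω} = {ω | W ω ≤ -ΔF + ε}ᶜ := by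
    ext ω
    simp only [Set.mem_setOf_eq, Set.mem_compl_iff, not_le]
    constructor <;> intro h <;> linarith
  rw [hEq] at hcant
  set p : ℝ := (μ {ω | W ω ≤ -ΔF + ε}).toReal with hp
  set q : ℝ := (μ {ω | W ω ≤ -ΔF + ε}ᶜ).toReal with hq
  have hp0 : 0 ≤ p := ENNReal.toReal_nonneg
  have hq0 : 0 ≤ q := ENNReal.toReal_nonneg
  have hpq : 1 ≤ p + q := by
    have h1 : μ Set.univ ≤ μ {ω | W ω ≤ -ΔF + ε} + μ {ω | W ω ≤ -ΔF + ε}ᶜ := by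
      rw [← Set.union_compl_self {ω | W ω ≤ -ΔF + ε}]
      exact measure_union_le _ _
    have h2 := ENNReal.toReal_mono (by finiteness) h1
    rw [measure_univ, ENNReal.toReal_one,
      ENNReal.toReal_add (by finiteness) (by finiteness)] at h2
    exact h2
  have hV0 : 0 ≤ variance W μ := variance_nonneg W μ
  have hvar' : variance W μ * β ≤ 2 * A := by
    calc variance W μ * β ≤ (2 * A / β) * β := mul_le_mul_of_nonneg_right hvar hβ.le
      _ = 2 * A := by field_simp
  have hB : (4 / β) * β = 4 := by field_simp
  have hBpos : 0 < 4 / β + ε := by positivity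
  rw [div_le_iff₀ hBpos]
  have hD : (0:ℝ) < (A + ε) ^ 2 + variance W μ := by positivity
  have h3 : q * ((A + ε) ^ 2 + variance W μ) * ((4 / β + ε) * β)
      ≤ variance W μ * ((4 / β + ε) * β) :=
    mul_le_mul_of_nonneg_right hcant (mul_nonneg hBpos.le hβ.le)
  have h4 : variance W μ * ((4 / β + ε) * β)
      = 4 * variance W μ + (variance W μ * β) * ε := by
    field_simp
  have h5 : (variance W μ * β) * ε ≤ 2 * A * ε :=
    mul_le_mul_of_nonneg_right hvar' hε.le
  have h6 : q * ((4 / β + ε) * β) * ((A + ε) ^ 2 + variance W μ)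
      ≤ 4 * ((A + ε) ^ 2 + variance W μ) := by nlinarith [h3, h4, h5, sq_nonneg (A + ε)]
  have h7 : q * ((4 / β + ε) * β) ≤ 4 := le_of_mul_le_mul_right h6 hD
  have h8 : (q * (4 / β + ε)) * β ≤ (4 / β) * β := by rw [hB]; linarith [h7]
  have h9 : q * (4 / β + ε) ≤ 4 / β := le_of_mul_le_mul_right h8 hβ
  nlinarith [mul_le_mul_of_nonneg_right (by linarith : 1 - q ≤ p) hBpos.le, h9]
end

section
/- Combining the two cases: if W has mean E[W] = -ΔF - A with A ≥ 0, Var(W) ≤ 2A/β for β > 0, then for any ε > 0, P(W ≤ -ΔF + ε) ≥ min{2/3, ε/(4/β + ε)}. -/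
open MeasureTheory ProbabilityTheory

theorem middle_stage_concentration
    {Ω : Type*} [MeasurableSpace Ω] (μ : Measure Ω) [IsProbabilityMeasure μ]
    (W : Ω → ℝ) (hW : MemLp W 2 μ)
    (β ΔF A : ℝ) (hβ : 0 < β) (hA : 0 ≤ A)
    (hmean : ∫ ω, W ω ∂μ = -ΔF - A)
    (hvar : variance W μ ≤ 2 * A / β)
    (ε : ℝ) (hε : 0 < ε) :
    min (2 / 3) (ε / (4 / β + ε)) ≤ (μ {ω | W ω ≤ -ΔF + ε}).toReal := by
  set m : ℝ := -ΔF - A with hm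
  set σ2 : ℝ := variance W μ with hσ2
  have hσ2_nonneg : 0 ≤ σ2 := variance_nonneg _ _
  set t : ℝ := A + ε with ht
  have ht_pos : 0 < t := by positivity
  set u : ℝ := σ2 / t with hu
  have hu_nonneg : 0 ≤ u := by positivity
  -- the shifted variable
  have hY : MemLp (fun ω => W ω - m + u) 2 μ :=
    (hW.sub (memLp_const m)).add (memLp_const u)
  have hf_int : Integrable (fun ω => (W ω - m + u) ^ 2) μ := by
    have := hY.integrable_sq
    simpa using this
  have hf_nonneg : 0 ≤ᵐ[μ] fun ω => (W ω - m + u) ^ 2 :=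
    Filter.Eventually.of_forall fun ω => sq_nonneg _
  -- compute the second moment of the shifted variable
  have hWm_int : Integrable (fun ω => W ω - m) μ :=
    (hW.integrable one_le_two).sub (integrable_const m)
  have hWm_sq_int : Integrable (fun ω => (W ω - m) ^ 2) μ := by
    have := (hW.sub (memLp_const m)).integrable_sq
    simpa using this
  have hmean0 : ∫ ω, (W ω - m) ∂μ = 0 := by
    rw [integral_sub (hW.integrable one_le_two) (integrable_const m)]
    simp [hmean, hm]
  have hvar_eq : ∫ ω, (W ω - m) ^ 2 ∂μ = σ2 := by
    rw [hσ2, variance_eq_integral hW.aestronglyMeasurable.aemeasurable, hmean]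
  have hint_f : ∫ ω, (W ω - m + u) ^ 2 ∂μ = σ2 + u ^ 2 := by
    have hexp : ∀ ω, (W ω - m + u) ^ 2 = (W ω - m) ^ 2 + (2 * u * (W ω - m) + u ^ 2) := by
      intro ω; ring
    rw [integral_congr_ae (Filter.Eventually.of_forall hexp)]
    have h1 : ∫ ω, ((W ω - m) ^ 2 + (2 * u * (W ω - m) + u ^ 2)) ∂μ
        = (∫ ω, (W ω - m) ^ 2 ∂μ) + ∫ ω, (2 * u * (W ω - m) + u ^ 2) ∂μ :=
      integral_add hWm_sq_int ((hWm_int.const_mul (2 * u)).add (integrable_const _))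
    have h2 : ∫ ω, (2 * u * (W ω - m) + u ^ 2) ∂μ
        = (∫ ω, 2 * u * (W ω - m) ∂μ) + ∫ _ω, u ^ 2 ∂μ :=
      integral_add (hWm_int.const_mul (2 * u)) (integrable_const _)
    have h3 : ∫ ω, 2 * u * (W ω - m) ∂μ = 2 * u * ∫ ω, (W ω - m) ∂μ :=
      integral_const_mul _ _
    rw [h1, h2, h3, hmean0, hvar_eq]
    simp
  -- Markov's inequality on the shifted squared variable
  have hmarkov : (t + u) ^ 2 * (μ {ω | (t + u) ^ 2 ≤ (W ω - m + u) ^ 2}).toReal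
      ≤ σ2 + u ^ 2 := by
    rw [← hint_f]
    exact mul_meas_ge_le_integral_of_nonneg hf_nonneg hf_int _
  -- the tail event is contained in the Markov event
  have hsub : {ω | m + t ≤ W ω} ⊆ {ω | (t + u) ^ 2 ≤ (W ω - m + u) ^ 2} := by
    intro ω hω
    simp only [Set.mem_setOf_eq] at hω ⊢
    have h1 : t + u ≤ W ω - m + u := by linarith
    have h2 : 0 ≤ t + u := by positivity
    nlinarith
  have htail : (μ {ω | m + t ≤ W ω}).toReal ≤ σ2 / (σ2 + t ^ 2) := by
    have hmono : (μ {ω | m + t ≤ W ω}).toReal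
        ≤ (μ {ω | (t + u) ^ 2 ≤ (W ω - m + u) ^ 2}).toReal := by
      apply ENNReal.toReal_mono (measure_ne_top _ _)
      exact measure_mono hsub
    have htu_pos : 0 < (t + u) ^ 2 := by positivity
    have h1 : (t + u) ^ 2 * (μ {ω | m + t ≤ W ω}).toReal ≤ σ2 + u ^ 2 := by
      calc (t + u) ^ 2 * (μ {ω | m + t ≤ W ω}).toReal
          ≤ (t + u) ^ 2 * (μ {ω | (t + u) ^ 2 ≤ (W ω - m + u) ^ 2}).toReal :=
            by exact mul_le_mul_of_nonneg_left hmono htu_pos.le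
        _ ≤ σ2 + u ^ 2 := hmarkov
    have h2 : (μ {ω | m + t ≤ W ω}).toReal ≤ (σ2 + u ^ 2) / (t + u) ^ 2 :=
      (le_div_iff₀ htu_pos).mpr (by linarith [h1])
    have h3 : (σ2 + u ^ 2) / (t + u) ^ 2 = σ2 / (σ2 + t ^ 2) := by
      rw [hu]
      have ht_ne : t ≠ 0 := ht_pos.ne'
      have hden : 0 < σ2 + t ^ 2 := by positivity
      field_simp
      ring
    linarith [h2, h3 ▸ h2]
  -- relate target set to complement of tail
  have hkey : 1 - σ2 / (σ2 + t ^ 2) ≤ (μ {ω | W ω ≤ -ΔF + ε}).toReal := by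
    have hset : {ω | W ω ≤ -ΔF + ε} = {ω | W ω ≤ m + t} := by
      ext ω; simp only [Set.mem_setOf_eq, hm, ht]; constructor <;> intro h <;> linarith
    rw [hset]
    have hcover : (1 : ENNReal) ≤ μ {ω | W ω ≤ m + t} + μ {ω | m + t ≤ W ω} := by
      have : Set.univ ⊆ {ω | W ω ≤ m + t} ∪ {ω | m + t ≤ W ω} := by
        intro ω _
        rcases le_total (W ω) (m + t) with h | h
        · exact Or.inl h
        · exact Or.inr h
      calc (1 : ENNReal) = μ Set.univ := (measure_univ).symm
        _ ≤ μ ({ω | W ω ≤ m + t} ∪ {ω | m + t ≤ W ω}) := measure_mono this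
        _ ≤ _ := measure_union_le _ _
    have hcover' : (1 : ℝ) ≤ (μ {ω | W ω ≤ m + t}).toReal + (μ {ω | m + t ≤ W ω}).toReal := by
      have := ENNReal.toReal_mono (by finiteness) hcover
      rwa [ENNReal.toReal_one, ENNReal.toReal_add (measure_ne_top _ _) (measure_ne_top _ _)]
        at this
    linarith [htail]
  -- final algebra
  have hfinal : ε / (4 / β + ε) ≤ 1 - σ2 / (σ2 + t ^ 2) := by
    have hden1 : 0 < 4 / β + ε := by positivity
    have hden2 : 0 < σ2 + t ^ 2 := by positivity
    rw [div_le_iff₀ hden1]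
    have h1 : (1 - σ2 / (σ2 + t ^ 2)) = t ^ 2 / (σ2 + t ^ 2) := by
      field_simp
      ring
    rw [h1, div_mul_eq_mul_div, le_div_iff₀ hden2]
    have hσ2A : σ2 ≤ 2 * A / β := hvar
    have hβ' : 0 < β := hβ
    rw [ht]
    have key : ε * A ≤ 2 * (A + ε) ^ 2 := by nlinarith
    have step : ε * σ2 ≤ (A + ε) ^ 2 * (4 / β) := by
      calc ε * σ2 ≤ ε * (2 * A / β) := mul_le_mul_of_nonneg_left hσ2A hε.le
        _ = (ε * A) * (2 / β) := by field_simp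
        _ ≤ (2 * (A + ε) ^ 2) * (2 / β) :=
            mul_le_mul_of_nonneg_right key (by positivity)
        _ = (A + ε) ^ 2 * (4 / β) := by field_simp; ring
    nlinarith [step]
  calc min (2 / 3) (ε / (4 / β + ε)) ≤ ε / (4 / β + ε) := min_le_right _ _
    _ ≤ 1 - σ2 / (σ2 + t ^ 2) := hfinal
    _ ≤ _ := hkey
end
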